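/- arXiv:1603.09260 — 2 statements merged into one kernel-verified Lean document; each statement's English description precedes it below -/
import Mathlib

section
/- Let f : ℝⁿ → ℝⁿ be continuously differentiable with Lipschitz continuous derivative (so f admits a well-defined second-order Taylor expansion), let y ∈ ℝⁿ be fixed, and let b be an ℝⁿ-valued random vector, independent of y, with i.i.d. coordinates of zero mean, unit variance, and bounded higher moments (in particular E[b] = 0, E[b bᵀ] = Iₙ, and E[‖b‖²] < ∞). Then lim_{ε → 0} E_b[ bᵀ ((f(y + εb) − f(y))/ε) ] = Σ_{i=1}^{n} ∂f_i/∂y_i (y), i.e. the Monte-Carlo perturbation estimator converges to the divergence (trace of the Jacobian) of f at y. -/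
open MeasureTheory ProbabilityTheory Filter

/-- Monte-Carlo divergence estimator (Theorem 1 of the paper, after Ramani et al.):
let `f : ℝⁿ → ℝⁿ` be continuously differentiable with Lipschitz derivative (so it
admits a well-defined second-order Taylor expansion), let `y` be fixed, and let `b`
be a random vector with i.i.d. coordinates of zero mean, unit variance and bounded
higher moments (in particular `E[b] = 0`, `E[b bᵀ] = Iₙ`, `E[‖b‖²] < ∞`). Then
`lim_{ε → 0} E_b[ bᵀ ((f(y + εb) − f(y))/ε) ] = Σ_i ∂f_i/∂y_i (y)`, the divergence
(trace of the Jacobian) of `f` at `y`. -/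
theorem monteCarlo_divergence_estimator
    {Ω : Type*} [MeasurableSpace Ω] (μ : Measure Ω) [IsProbabilityMeasure μ]
    (n : ℕ) (f : EuclideanSpace ℝ (Fin n) → EuclideanSpace ℝ (Fin n))
    (hf : ContDiff ℝ 1 f) (K : NNReal) (hf' : LipschitzWith K (fderiv ℝ f))
    (y : EuclideanSpace ℝ (Fin n))
    (b : Ω → EuclideanSpace ℝ (Fin n)) (hb : Measurable b)
    (hindep : iIndepFun (fun i ω => b ω i) μ)
    (hident : ∀ i j : Fin n, IdentDistrib (fun ω => b ω i) (fun ω => b ω j) μ μ)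
    (hmean : ∀ i, ∫ ω, b ω i ∂μ = 0)
    (hcov : ∀ i j : Fin n, ∫ ω, b ω i * b ω j ∂μ = if i = j then (1 : ℝ) else 0)
    (hmoments : ∀ p : ℕ, Integrable (fun ω => ‖b ω‖ ^ p) μ) :
    Tendsto
      (fun ε : ℝ =>
        ∫ ω, ∑ i, b ω i * ((f (y + ε • b ω) i - f y i) / ε) ∂μ)
      (nhdsWithin 0 {0}ᶜ)
      (nhds (∑ i, fderiv ℝ f y (EuclideanSpace.single i 1) i)) := by
  classical
  have hfd : Differentiable ℝ f := hf.differentiable one_ne_zero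
  set L : EuclideanSpace ℝ (Fin n) →L[ℝ] EuclideanSpace ℝ (Fin n) := fderiv ℝ f y with hLdef
  -- coordinate bound
  have hcoord : ∀ (x : EuclideanSpace ℝ (Fin n)) (i : Fin n), |x i| ≤ ‖x‖ := by
    intro x i
    have h1 : x i = inner ℝ (EuclideanSpace.single i (1:ℝ)) x := by
      rw [EuclideanSpace.inner_single_left]; simp
    rw [h1]
    calc |inner ℝ (EuclideanSpace.single i (1:ℝ)) x| ≤ ‖EuclideanSpace.single i (1:ℝ)‖ * ‖x‖ :=
          abs_real_inner_le_norm _ _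
      _ ≤ ‖x‖ := by simp [EuclideanSpace.norm_single]
  -- second-order Taylor bound
  have taylor : ∀ v : EuclideanSpace ℝ (Fin n),
      ‖f (y + v) - f y - L v‖ ≤ K * ‖v‖ * ‖v‖ := by
    intro v
    have hdiff : ∀ x ∈ Metric.closedBall y ‖v‖,
        DifferentiableAt ℝ (fun x => f x - L x) x :=
      fun x _ => (hfd x).sub (L.differentiableAt)
    have hbound : ∀ x ∈ Metric.closedBall y ‖v‖,
        ‖fderiv ℝ (fun x => f x - L x) x‖ ≤ K * ‖v‖ := by
      intro x hx
      rw [fderiv_fun_sub (hfd x) L.differentiableAt, L.fderiv]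
      have h1 : dist (fderiv ℝ f x) (fderiv ℝ f y) ≤ K * dist x y := hf'.dist_le_mul x y
      rw [dist_eq_norm] at h1
      refine h1.trans ?_
      have : dist x y ≤ ‖v‖ := Metric.mem_closedBall.mp hx
      exact mul_le_mul_of_nonneg_left this K.2
    have h2 := (convex_closedBall y ‖v‖).norm_image_sub_le_of_norm_fderiv_le hdiff hbound
      (Metric.mem_closedBall_self (norm_nonneg v))
      (by simpa [Metric.mem_closedBall, dist_eq_norm] using le_refl ‖v‖ :
        y + v ∈ Metric.closedBall y ‖v‖)
    have h3 : f (y + v) - (L y + L v) - (f y - L y) = f (y + v) - f y - L v := by abel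
    simpa [map_add, h3, add_sub_cancel_left] using h2
  -- coordinatewise measurability
  have hbi : ∀ i : Fin n, Measurable fun ω => b ω i := fun i =>
    ((EuclideanSpace.proj (𝕜 := ℝ) i).continuous.measurable).comp hb
  -- linear map in coordinates
  have hLx : ∀ (x : EuclideanSpace ℝ (Fin n)) (i : Fin n),
      L x i = ∑ j, x j * L (EuclideanSpace.single j 1) i := by
    intro x i
    have hx : x = ∑ j, x j • EuclideanSpace.single j (1:ℝ) := by
      have := (EuclideanSpace.basisFun (Fin n) ℝ).sum_repr x
      simpa [EuclideanSpace.basisFun_apply, EuclideanSpace.basisFun_repr] using this.symm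
    conv_lhs => rw [hx, map_sum]
    have := map_sum (EuclideanSpace.proj (𝕜 := ℝ) i)
      (fun j => L (x j • EuclideanSpace.single j (1:ℝ))) Finset.univ
    simp only [PiLp.proj_apply] at this
    rw [this]
    refine Finset.sum_congr rfl fun j _ => ?_
    rw [L.map_smul]
    simp [smul_eq_mul]
  -- the main (linear) part
  set A : Ω → ℝ := fun ω => ∑ i, b ω i * L (b ω) i with hAdef
  have hAmeas : Measurable A := by
    apply Finset.measurable_sum
    intro i _
    exact (hbi i).mul (((EuclideanSpace.proj (𝕜 := ℝ) i).continuous.measurable).comp (L.continuous.measurable.comp hb))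
  have hinner : ∀ (x z : EuclideanSpace ℝ (Fin n)), (∑ i, x i * z i) = inner ℝ x z := by
    intro x z
    rw [PiLp.inner_apply]
    simp [RCLike.inner_apply, mul_comm]
  have hAbound : ∀ ω, |A ω| ≤ ‖L‖ * ‖b ω‖ ^ 2 := by
    intro ω
    calc |A ω| = |(inner ℝ (b ω) (L (b ω)) : ℝ)| := by
          show |∑ i, b ω i * L (b ω) i| = _
          rw [hinner]
      _ ≤ ‖b ω‖ * ‖L (b ω)‖ := abs_real_inner_le_norm _ _
      _ ≤ ‖L‖ * ‖b ω‖ ^ 2 := by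
          have := L.le_opNorm (b ω)
          calc ‖b ω‖ * ‖L (b ω)‖ ≤ ‖b ω‖ * (‖L‖ * ‖b ω‖) :=
                mul_le_mul_of_nonneg_left this (norm_nonneg _)
            _ = ‖L‖ * ‖b ω‖ ^ 2 := by ring
  have hAint : Integrable A μ := by
    refine ((hmoments 2).const_mul ‖L‖).mono' hAmeas.aestronglyMeasurable
      (ae_of_all _ fun ω => ?_)
    rw [Real.norm_eq_abs]
    exact hAbound ω
  -- integrability of coordinate products
  have hbij : ∀ i j : Fin n, Integrable (fun ω => b ω i * b ω j) μ := by
    intro i j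
    refine (hmoments 2).mono' (((hbi i).mul (hbi j)).aestronglyMeasurable)
      (ae_of_all _ fun ω => ?_)
    rw [Real.norm_eq_abs, abs_mul]
    calc |b ω i| * |b ω j| ≤ ‖b ω‖ * ‖b ω‖ :=
          mul_le_mul (hcoord _ _) (hcoord _ _) (abs_nonneg _) (norm_nonneg _)
      _ = ‖b ω‖ ^ 2 := (sq ‖b ω‖).symm
  -- the integral of the linear part is the divergence
  have hA_eq : ∀ ω, A ω = ∑ i, ∑ j, L (EuclideanSpace.single j 1) i * (b ω i * b ω j) := by
    intro ω
    show (∑ i, b ω i * L (b ω) i) = _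
    refine Finset.sum_congr rfl fun i _ => ?_
    rw [hLx (b ω) i, Finset.mul_sum]
    exact Finset.sum_congr rfl fun j _ => by ring
  have hAint_eq : ∫ ω, A ω ∂μ = ∑ i, L (EuclideanSpace.single i 1) i := by
    rw [show (fun ω => A ω) = fun ω => ∑ i, ∑ j, L (EuclideanSpace.single j 1) i * (b ω i * b ω j)
      from funext hA_eq]
    rw [integral_finset_sum _ fun i _ =>
      integrable_finset_sum _ fun j _ => (hbij i j).const_mul _]
    have : ∀ i : Fin n, ∫ ω, (∑ j, L (EuclideanSpace.single j 1) i * (b ω i * b ω j)) ∂μ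
        = L (EuclideanSpace.single i 1) i := by
      intro i
      rw [integral_finset_sum _ fun j _ => (hbij i j).const_mul _]
      have : ∀ j : Fin n, ∫ ω, L (EuclideanSpace.single j 1) i * (b ω i * b ω j) ∂μ
          = L (EuclideanSpace.single j 1) i * (if i = j then (1:ℝ) else 0) := by
        intro j
        rw [integral_const_mul (L (EuclideanSpace.single j 1) i) (fun ω => b ω i * b ω j), hcov i j]
      simp only [this, mul_ite, mul_one, mul_zero]
      simp
    simp only [this]
  -- remainder vector
  set r : ℝ → Ω → EuclideanSpace ℝ (Fin n) :=
    fun ε ω => ε⁻¹ • (f (y + ε • b ω) - f y) - L (b ω) with hrdef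
  have hrnorm : ∀ ε : ℝ, ε ≠ 0 → ∀ ω, ‖r ε ω‖ ≤ K * |ε| * ‖b ω‖ ^ 2 := by
    intro ε hε ω
    have h1 : r ε ω = ε⁻¹ • (f (y + ε • b ω) - f y - L (ε • b ω)) := by
      rw [hrdef]
      simp only [smul_sub, L.map_smul, smul_smul, inv_mul_cancel₀ hε, one_smul]
    rw [h1, norm_smul]
    have h2 := taylor (ε • b ω)
    calc ‖ε⁻¹‖ * ‖f (y + ε • b ω) - f y - L (ε • b ω)‖
        ≤ |ε|⁻¹ * (K * ‖ε • b ω‖ * ‖ε • b ω‖) := by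
          rw [Real.norm_eq_abs, abs_inv]
          exact mul_le_mul_of_nonneg_left h2 (by positivity)
      _ = K * |ε| * ‖b ω‖ ^ 2 := by
          rw [norm_smul, Real.norm_eq_abs]
          field_simp
  -- remainder scalar
  set R : ℝ → Ω → ℝ := fun ε ω => ∑ i, b ω i * r ε ω i with hRdef
  have hRbound : ∀ ε : ℝ, ε ≠ 0 → ∀ ω, |R ε ω| ≤ K * |ε| * ‖b ω‖ ^ 3 := by
    intro ε hε ω
    calc |R ε ω| = |(inner ℝ (b ω) (r ε ω) : ℝ)| := by
          show |∑ i, b ω i * r ε ω i| = _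
          rw [hinner]
      _ ≤ ‖b ω‖ * ‖r ε ω‖ := abs_real_inner_le_norm _ _
      _ ≤ ‖b ω‖ * (K * |ε| * ‖b ω‖ ^ 2) :=
          mul_le_mul_of_nonneg_left (hrnorm ε hε ω) (norm_nonneg _)
      _ = K * |ε| * ‖b ω‖ ^ 3 := by ring
  have hRmeas : ∀ ε : ℝ, Measurable (R ε) := by
    intro ε
    have hc : Continuous fun x : EuclideanSpace ℝ (Fin n) =>
        ε⁻¹ • (f (y + ε • x) - f y) - L x := by
      apply Continuous.sub
      · exact (((hf.continuous.comp (continuous_const.add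
          (continuous_id.const_smul ε))).sub continuous_const).const_smul ε⁻¹)
      · exact L.continuous
    have hrm : Measurable (r ε) := hc.measurable.comp hb
    apply Finset.measurable_sum
    intro i _
    exact (hbi i).mul (((EuclideanSpace.proj (𝕜 := ℝ) i).continuous.measurable).comp hrm)
  have hRint : ∀ ε : ℝ, ε ≠ 0 → Integrable (R ε) μ := by
    intro ε hε
    refine ((hmoments 3).const_mul (K * |ε|)).mono' (hRmeas ε).aestronglyMeasurable
      (ae_of_all _ fun ω => ?_)
    simpa [Real.norm_eq_abs] using hRbound ε hε ω
  -- pointwise decomposition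
  have hdecomp : ∀ ε : ℝ, ε ≠ 0 → ∀ ω,
      (∑ i, b ω i * ((f (y + ε • b ω) i - f y i) / ε)) = A ω + R ε ω := by
    intro ε hε ω
    rw [hAdef, hRdef]
    show _ = (∑ i, b ω i * L (b ω) i) + ∑ i, b ω i * r ε ω i
    rw [← Finset.sum_add_distrib]
    refine Finset.sum_congr rfl fun i _ => ?_
    have hri : r ε ω i = ε⁻¹ * (f (y + ε • b ω) i - f y i) - L (b ω) i := by
      rw [hrdef]
      show (ε⁻¹ • (f (y + ε • b ω) - f y) - L (b ω)) i = _
      simp [PiLp.smul_apply, PiLp.sub_apply, smul_eq_mul]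
    rw [hri, div_eq_inv_mul]
    ring
  set C : ℝ := ∫ ω, ‖b ω‖ ^ 3 ∂μ with hCdef
  have hCnonneg : 0 ≤ C := integral_nonneg fun ω => by positivity
  -- key estimate
  have key : ∀ ε : ℝ, ε ≠ 0 →
      ‖(∫ ω, ∑ i, b ω i * ((f (y + ε • b ω) i - f y i) / ε) ∂μ)
        - ∑ i, L (EuclideanSpace.single i 1) i‖ ≤ K * C * |ε| := by
    intro ε hε
    have h1 : (∫ ω, ∑ i, b ω i * ((f (y + ε • b ω) i - f y i) / ε) ∂μ)
        = (∫ ω, A ω ∂μ) + ∫ ω, R ε ω ∂μ := by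
      rw [show (fun ω => ∑ i, b ω i * ((f (y + ε • b ω) i - f y i) / ε))
        = fun ω => A ω + R ε ω from funext (hdecomp ε hε)]
      exact integral_add hAint (hRint ε hε)
    rw [h1, hAint_eq, add_sub_cancel_left]
    calc ‖∫ ω, R ε ω ∂μ‖ ≤ ∫ ω, ‖R ε ω‖ ∂μ := norm_integral_le_integral_norm _
      _ ≤ ∫ ω, K * |ε| * ‖b ω‖ ^ 3 ∂μ := by
          refine integral_mono (hRint ε hε).norm ((hmoments 3).const_mul _) fun ω => ?_
          simpa [Real.norm_eq_abs] using hRbound ε hε ω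
      _ = K * C * |ε| := by
          rw [integral_const_mul]
          ring
  rw [← tendsto_sub_nhds_zero_iff]
  apply squeeze_zero_norm' (a := fun ε : ℝ => (K : ℝ) * C * |ε|)
  · refine Filter.eventually_of_mem self_mem_nhdsWithin fun ε hε => ?_
    exact key ε (by simpa using hε)
  · have h2 : Tendsto (fun ε : ℝ => (K : ℝ) * C * |ε|) (nhds 0) (nhds ((K : ℝ) * C * |0|)) :=
      (continuous_const.mul continuous_abs).tendsto 0
    simp only [abs_zero, mul_zero] at h2
    exact h2.mono_left nhdsWithin_le_nhds
end

section
/- Let L : ℝ^{k−1} → ℝ^{k−1} be differentiable at a point v, with L(v) lying in the interior of the probability simplex (each coordinate positive, coordinates summing to less than 1). Let θ be the natural parameter map θ_c(μ) = ln μ_c − ln(1 − Σ_{l=1}^{k−1} μ_l), let D ∈ ℝ^{(k−1)×(k−1)} be the Jacobian of the composite θ ∘ L at v, i.e. D_{jl} = ∂θ_j(L(·))/∂(·)_l evaluated at v, and let C = C(L(v)) be the categorical covariance matrix with entries C_{jl} = L_j(v) δ_{jl} − L_j(v) L_l(v). Then Σ_{j=1}^{k−1} Σ_{l=1}^{k−1}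 C_{jl} D_{jl} = Σ_{j=1}^{k−1} ∂L_j/∂v_j (v); i.e. the double sum 2 Σ_{j,l} cov(p_j, p_l) ∂θ_j(L(v))/∂v_l of Equation (2) reduces to 2 Σ_j ∂L_j(v)/∂v_j of Equation (3). -/
/-- Reduction of the estimated expected optimism: if `L` maps observation vectors to
estimated categorical probabilities, `μ̂ = L(v)` lies in the interior of the
probability simplex, `D` is the Jacobian of the composite `θ ∘ L` at `v` (with `θ`
the natural parameter map `θ_j(μ) = ln μ_j − ln(1 − Σ_c μ_c)`), and
`C_{jl} = L_j(v) δ_{jl} − L_j(v) L_l(v)` is the categorical covariance matrix, then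
`Σ_j Σ_l C_{jl} D_{jl} = Σ_j ∂L_j/∂v_j (v)`. -/
theorem cov_dot_jacobian_naturalParam_comp_eq_divergence
    (k : ℕ) (L : (Fin (k - 1) → ℝ) → (Fin (k - 1) → ℝ)) (v : Fin (k - 1) → ℝ)
    (hL : DifferentiableAt ℝ L v)
    (hpos : ∀ c, 0 < L v c) (hsum : ∑ c, L v c < 1)
    (D C : Matrix (Fin (k - 1)) (Fin (k - 1)) ℝ)
    (hD : ∀ j l, D j l =
      fderiv ℝ (fun w : Fin (k - 1) → ℝ =>
        Real.log (L w j) - Real.log (1 - ∑ c, L w c)) v (Pi.single l 1))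
    (hC : ∀ j l, C j l = (if j = l then L v j else 0) - L v j * L v l) :
    ∑ j, ∑ l, C j l * D j l
      = ∑ j, fderiv ℝ (fun w : Fin (k - 1) → ℝ => L w j) v (Pi.single j 1) := by
  classical
  have hf : ∀ j, DifferentiableAt ℝ (fun w => L w j) v := fun j =>
    (differentiableAt_pi.mp hL) j
  set A : Fin (k-1) → Fin (k-1) → ℝ :=
    fun j l => fderiv ℝ (fun w => L w j) v (Pi.single l 1) with hA
  set μ : Fin (k-1) → ℝ := L v with hμ
  have hS : (0:ℝ) < 1 - ∑ c, μ c := by simpa using sub_pos.mpr hsum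
  have hsumF : HasFDerivAt (fun w : Fin (k-1) → ℝ => 1 - ∑ c, L w c)
      (-(∑ c, fderiv ℝ (fun w => L w c) v)) v := by
    have h1 : HasFDerivAt (fun w : Fin (k-1) → ℝ => ∑ c, L w c)
        (∑ c, fderiv ℝ (fun w => L w c) v) v :=
      HasFDerivAt.fun_sum (fun c _ => (hf c).hasFDerivAt)
    simpa using (hasFDerivAt_const (1:ℝ) v).fun_sub h1
  have hD' : ∀ j l, D j l = A j l / μ j + (∑ c, A c l) / (1 - ∑ c, μ c) := by
    intro j l
    have hlog1 : HasFDerivAt (fun w : Fin (k-1) → ℝ => Real.log (L w j))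
        ((μ j)⁻¹ • fderiv ℝ (fun w => L w j) v) v :=
      (hf j).hasFDerivAt.log (hpos j).ne'
    have hlog2 : HasFDerivAt (fun w : Fin (k-1) → ℝ => Real.log (1 - ∑ c, L w c))
        ((1 - ∑ c, μ c)⁻¹ • (-(∑ c, fderiv ℝ (fun w => L w c) v))) v :=
      hsumF.log hS.ne'
    have htot := hlog1.fun_sub hlog2
    rw [hD j l, htot.fderiv]
    simp only [ContinuousLinearMap.coe_sub', Pi.sub_apply,
      ContinuousLinearMap.coe_smul', Pi.smul_apply, ContinuousLinearMap.neg_apply,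
      ContinuousLinearMap.coe_sum', Finset.sum_apply, smul_eq_mul, hA,
      div_eq_inv_mul]
    ring
  have key : ∀ l, ∑ j, C j l * D j l = A l l := by
    intro l
    have hμj : ∀ j, μ j ≠ 0 := fun j => (hpos j).ne'
    have hsne : (1 - ∑ c, μ c) ≠ 0 := hS.ne'
    set T : ℝ := ∑ c, A c l with hT
    set s : ℝ := 1 - ∑ c, μ c with hs
    have step : ∀ j, C j l * D j l =
        ((if j = l then A j l + μ j * (T / s) else 0) - μ l * (A j l + μ j * (T / s))) := by
      intro j
      rw [hC, hD']
      by_cases h : j = l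
      · subst h
        simp only [if_pos rfl, eq_self_iff_true, if_true]
        field_simp [hμj j, hsne]
        ring
      · simp only [if_neg h]
        field_simp [hμj j, hsne]
        ring
    rw [Finset.sum_congr rfl (fun j _ => step j), Finset.sum_sub_distrib,
      Finset.sum_ite_eq' Finset.univ l, if_pos (Finset.mem_univ l)]
    have h2 : ∑ j, μ l * (A j l + μ j * (T / s)) = μ l * (T + (∑ c, μ c) * (T / s)) := by
      rw [← Finset.mul_sum, Finset.sum_add_distrib, ← Finset.sum_mul, ← hT]
    rw [h2]
    have hS1 : (∑ c, μ c) = 1 - s := by rw [hs]; ring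
    rw [hS1]
    field_simp
    ring
  calc ∑ j, ∑ l, C j l * D j l = ∑ l, ∑ j, C j l * D j l := Finset.sum_comm
    _ = ∑ l, A l l := Finset.sum_congr rfl (fun l _ => key l)
    _ = _ := rfl
end
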